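/- Let 𝒜 be a finite alphabet with |𝒜| = a ≥ 3 containing two distinguished symbols 0 and 1, let n be even, and let X_LB ∈ 𝒜^n be the alternating string 0101…01. Let d, i ∈ ℕ with 2d ≤ n. Then the number of distinct strings Y over 𝒜 obtainable from X_LB by first deleting a set of d pairwise non-adjacent positions and then inserting i symbols from 𝒜 \ {0,1} at arbitrary positions is at least C(n−d, d)·C(n−d+i, i)·(a−2)^i. In particular, the post-edit set of X_LB with deletion budget d and insertion budget i has cardinality at least C(n−d, d)·C(n−d+i, i)·(a−2)^i. -/

import Mathlib

set_option linter.unusedSectionVars false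
set_option linter.unusedVariables false
set_option linter.unnecessarySimpa false

/-- The post-edit set of a string `X` with deletion budget `d` and insertion
budget `i`. -/
def PostEditSet {α : Type*} (X : List α) (d i : ℕ) : Set (List α) :=
  {Y | ∃ Z : List α, Z.Sublist X ∧ Z.Sublist Y ∧
    X.length - Z.length ≤ d ∧ Y.length - Z.length ≤ i}

/-- `deleteIndices X S` is the string obtained from `X` by deleting the symbols
whose positions lie in `S`. -/
def deleteIndices {α : Type*} (X : List α) (S : Finset ℕ) : List α :=
  (X.zipIdx.filter (fun p => p.2 ∉ S)).map Prod.fst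

/-- `InsertSeq A i X Y` : `Y` is obtained from `X` by exactly `i` single-symbol
insertions, at arbitrary positions, of symbols drawn from the set `A`. -/
inductive InsertSeq {α : Type*} (A : Set α) : ℕ → List α → List α → Prop
  | refl (X : List α) : InsertSeq A 0 X X
  | step {i : ℕ} {X Y Z : List α} (u v : List α) (c : α) :
      c ∈ A → X = u ++ v → Y = u ++ [c] ++ v → InsertSeq A i Y Z →
      InsertSeq A (i + 1) X Z

namespace EditAux



variable {α : Type*}

lemma insertSeq_cons {A : Set α} {i : ℕ} {X Y : List α} (h : InsertSeq A i X Y) (c : α) :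
    InsertSeq A i (c :: X) (c :: Y) := by
  induction h with
  | refl X => exact .refl _
  | step u v c' hc hX hY _ ih =>
      exact .step (c :: u) v c' hc (by simp [hX]) (by simp [hY]) ih

lemma insertSeq_spec {A : Set α} {i : ℕ} {X Y : List α} (h : InsertSeq A i X Y) :
    X.Sublist Y ∧ Y.length = X.length + i := by
  induction h with
  | refl X => simp
  | step u v c' hc hX hY _ ih =>
      constructor
      · refine List.Sublist.trans ?_ ih.1
        rw [hX, hY]
        simpa using List.Sublist.append_left (List.sublist_cons_self c' v) u
      · rw [ih.2, hX, hY]; simp; omega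

lemma insertSeq_of_filter {A : Set α} (p : α → Bool) :
    ∀ (Y : List α) (i : ℕ) (w : List α), Y.filter p = w → Y.length = w.length + i →
      (∀ c ∈ Y, p c = false → c ∈ A) → InsertSeq A i w Y := by
  intro Y
  induction Y with
  | nil =>
      intro i w hf hl _
      simp at hf; subst hf
      simp at hl; subst hl
      exact .refl _
  | cons c Y' ih =>
      intro i w hf hl hA
      by_cases hp : p c
      · rw [List.filter_cons_of_pos hp] at hf
        subst hf
        simp at hl
        have h1 := ih i (Y'.filter p) rfl (by omega) (fun c hc => hA c (List.mem_cons_of_mem _ hc))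
        exact insertSeq_cons h1 c
      · rw [List.filter_cons_of_neg (by simpa using hp)] at hf
        subst hf
        have hle : (Y'.filter p).length ≤ Y'.length := List.length_filter_le _ _
        simp at hl
        obtain ⟨i', rfl⟩ : ∃ i', i = i' + 1 := ⟨i - 1, by omega⟩
        have h1 := ih i' (Y'.filter p) rfl (by omega)
          (fun c hc => hA c (List.mem_cons_of_mem _ hc))
        exact .step [] (Y'.filter p) c (hA c List.mem_cons_self (by simpa using hp))
          rfl rfl (insertSeq_cons h1 c)



variable {α : Type*}

def mrg : List α → List (Option α) → List α
  | w, [] => w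
  | w, some b :: V => b :: mrg w V
  | [], none :: V => mrg [] V
  | a :: w, none :: V => a :: mrg w V

lemma mrg_mem : ∀ (V : List (Option α)) (w : List α) (c : α),
    c ∈ mrg w V → c ∈ w ∨ some c ∈ V := by
  intro V
  induction V with
  | nil => intro w c h; exact Or.inl (by simpa [mrg] using h)
  | cons x V ih =>
      intro w c h
      match x, w with
      | some b, w =>
          rcases (by simpa [mrg] using h : c = b ∨ c ∈ mrg w V) with h | h
          · exact Or.inr (by simp [h])
          · rcases ih w c h with h | h
            · exact Or.inl h
            · exact Or.inr (by simp [h])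
      | none, [] =>
          rcases ih [] c (by simpa [mrg] using h) with h | h
          · exact Or.inl h
          · exact Or.inr (by simp [h])
      | none, a :: w =>
          rcases (by simpa [mrg] using h : c = a ∨ c ∈ mrg w V) with h | h
          · exact Or.inl (by simp [h])
          · rcases ih w c h with h | h
            · exact Or.inl (by simp [h])
            · exact Or.inr (by simp [h])

lemma mrg_filter (p : α → Bool) : ∀ (V : List (Option α)) (w : List α),
    (∀ a ∈ w, p a = true) → (∀ b : α, some b ∈ V → p b = false) →
    (mrg w V).filter p = w := by
  intro V
  induction V with
  | nil => intro w hw _; simpa [mrg] using List.filter_eq_self.2 hw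
  | cons x V ih =>
      intro w hw hV
      match x, w with
      | some b, w =>
          have hb : p b = false := hV b (by simp)
          simp only [mrg, List.filter_cons, hb]
          simp only [Bool.false_eq_true, if_false]
          exact ih w hw (fun b hb => hV b (by simp [hb]))
      | none, [] =>
          simpa [mrg] using ih [] (by simp) (fun b hb => hV b (by simp [hb]))
      | none, a :: w =>
          have ha : p a = true := hw a (by simp)
          simp only [mrg, List.filter_cons, ha, if_true]
          rw [ih w (fun x hx => hw x (by simp [hx])) (fun b hb => hV b (by simp [hb]))]

lemma mrg_length : ∀ (V : List (Option α)) (w : List α),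
    V.countP (fun x => x.isNone) = w.length →
    (mrg w V).length = w.length + V.countP (fun x => x.isSome) := by
  intro V
  induction V with
  | nil => intro w h; simp [mrg]
  | cons x V ih =>
      intro w h
      match x, w with
      | some b, w =>
          simp only [mrg, List.length_cons, List.countP_cons] at *
          simp at h
          rw [ih w h]
          simp; ring
      | none, [] => simp [List.countP_cons] at h
      | none, a :: w =>
          simp only [mrg, List.length_cons, List.countP_cons] at *
          simp at h ⊢
          rw [ih w h]
          omega

lemma mrg_map (p : α → Bool) : ∀ (V : List (Option α)) (w : List α),
    (∀ a ∈ w, p a = true) → (∀ b : α, some b ∈ V → p b = false) →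
    V.countP (fun x => x.isNone) = w.length →
    (mrg w V).map (fun c => if p c then none else some c) = V := by
  intro V
  induction V with
  | nil =>
      intro w _ _ h
      simp at h
      rw [List.eq_nil_of_length_eq_zero h.symm]
      simp [mrg]
  | cons x V ih =>
      intro w hw hV h
      match x, w with
      | some b, w =>
          have hb : p b = false := hV b (by simp)
          simp only [mrg, List.map_cons, hb]
          simp only [List.countP_cons] at h
          simp at h
          rw [ih w hw (fun b hb => hV b (by simp [hb])) h]
          simp [hb]
      | none, [] => simp [List.countP_cons] at h
      | none, a :: w =>
          have ha : p a = true := hw a (by simp)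
          simp only [mrg, List.map_cons, ha]
          simp only [List.countP_cons] at h
          simp at h
          rw [ih w (fun x hx => hw x (by simp [hx])) (fun b hb => hV b (by simp [hb])) (by omega)]
          simp [ha]




variable {α : Type*}

lemma keptChain (S : Finset ℕ) (hS : ∀ j, ¬(j ∈ S ∧ j + 1 ∈ S)) :
    ∀ (n s : ℕ),
      List.Chain' (fun x y => x < y ∧ y ≤ x + 2)
          ((List.range' s n).filter (fun j => decide (j ∉ S))) ∧
        (∀ x ∈ ((List.range' s n).filter (fun j => decide (j ∉ S))).head?, x ≤ s + 1) := by
  intro n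
  induction n using Nat.strong_induction_on with
  | _ n ih =>
    intro s
    match n with
    | 0 => exact ⟨List.isChain_nil, by simp⟩
    | Nat.succ k =>
      rw [List.range'_succ]
      by_cases hs : s ∈ S
      · rw [List.filter_cons_of_neg (by simp [hs])]
        refine ⟨(ih k (by omega) (s + 1)).1, ?_⟩
        match k with
        | 0 => simp
        | Nat.succ k' =>
          rw [List.range'_succ,
            List.filter_cons_of_pos (by simpa using fun h => hS s ⟨hs, h⟩)]
          intro x hx
          simp at hx
          omega
      · rw [List.filter_cons_of_pos (by simp [hs])]
        have h1 := ih k (by omega) (s + 1)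
        constructor
        · refine List.isChain_cons.mpr ?_
          refine ⟨?_, h1.1⟩
          intro y hy
          have hy2 := h1.2 y hy
          have hmem : y ∈ List.range' (s + 1) k :=
            List.mem_of_mem_filter (List.mem_of_mem_head? hy)
          have h3 : s + 1 ≤ y := (List.mem_range'_1.mp hmem).1
          exact ⟨by omega, by omega⟩
        · intro x hx; simp at hx; omega

lemma parityAux : ∀ (K K' : List ℕ),
    List.Chain' (fun x y => x < y ∧ y ≤ x + 2) K →
    List.Chain' (fun x y => x < y ∧ y ≤ x + 2) K' →
    K.map (· % 2) = K'.map (· % 2) →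
    (∀ x y, K.head? = some x → K'.head? = some y → x = y) →
    K = K' := by
  intro K
  induction K with
  | nil =>
      intro K' _ _ hm _
      cases K' with
      | nil => rfl
      | cons b K'' => simp at hm
  | cons a K ih =>
      intro K' hc hc' hm hh
      cases K' with
      | nil => simp at hm
      | cons b K'' =>
        have hab : a = b := hh a b rfl rfl
        subst hab
        simp only [List.map_cons, List.cons.injEq] at hm
        congr 1
        apply ih K'' hc.tail hc'.tail hm.2
        intro x y hx hy
        have h1 : a < x ∧ x ≤ a + 2 := (List.isChain_cons.mp hc).1 x hx
        have h2 : a < y ∧ y ≤ a + 2 := (List.isChain_cons.mp hc').1 y hy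
        have hxy : x % 2 = y % 2 := by
          have h3 := congrArg List.head? hm.2
          rw [List.head?_map, List.head?_map, hx, hy] at h3
          simpa using h3
        omega

lemma deleteIndices_map_range (f : ℕ → α) (n : ℕ) (S : Finset ℕ) :
    deleteIndices ((List.range n).map f) S =
      ((List.range n).filter (fun j => decide (j ∉ S))).map f := by
  unfold deleteIndices
  rw [List.zipIdx_eq_zip_range']
  simp only [List.length_map, List.length_range]
  rw [← List.range_eq_range']
  have h1 : ((List.range n).map f).zip (List.range n) =
      (List.range n).map (fun j => (f j, j)) := by
    simpa using (List.zip_map' (f := f) (g := id) (l := List.range n))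
  rw [h1, List.filter_map, List.map_map]
  rfl

lemma length_kept (n : ℕ) (S : Finset ℕ) (hsub : S ⊆ Finset.range n) :
    ((List.range n).filter (fun j => decide (j ∉ S))).length = n - S.card := by
  have h1 : ((List.range n).filter (fun j => decide (j ∈ S))).length = S.card := by
    have hnd : ((List.range n).filter (fun j => decide (j ∈ S))).Nodup :=
      (List.nodup_range).filter _
    rw [← List.toFinset_card_of_nodup hnd]
    congr 1
    ext j
    simp only [List.mem_toFinset, List.mem_filter, List.mem_range, decide_eq_true_eq]
    exact ⟨fun h => h.2, fun h => ⟨Finset.mem_range.mp (hsub h), h⟩⟩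
  have h2 := List.length_eq_countP_add_countP (fun j => decide (j ∈ S)) (l := List.range n)
  have h4 : (List.range n).countP (fun a => decide ¬(decide (a ∈ S) = true)) =
      (List.range n).countP (fun j => decide (j ∉ S)) :=
    List.countP_congr (fun a _ => by simp)
  rw [List.length_range, h4, List.countP_eq_length_filter, List.countP_eq_length_filter, h1] at h2
  omega



variable {α : Type*}

def mkS {m : ℕ} (d : ℕ) (T' : Finset (Fin m)) (h : T'.card = d) : Finset ℕ :=
  Finset.image (fun j : Fin d => ((T'.orderEmbOfFin h j : Fin m) : ℕ) + (j : ℕ)) Finset.univ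

lemma mkS_strictMono {m d : ℕ} (T' : Finset (Fin m)) (h : T'.card = d) :
    StrictMono (fun j : Fin d => ((T'.orderEmbOfFin h j : Fin m) : ℕ) + (j : ℕ)) := by
  intro j j' hjj
  have h1 : T'.orderEmbOfFin h j < T'.orderEmbOfFin h j' :=
    (T'.orderEmbOfFin h).strictMono hjj
  have h2 : ((T'.orderEmbOfFin h j : Fin m) : ℕ) < ((T'.orderEmbOfFin h j' : Fin m) : ℕ) := h1
  have h3 : (j : ℕ) < (j' : ℕ) := hjj
  dsimp only
  omega

lemma mkS_card {m d : ℕ} (T' : Finset (Fin m)) (h : T'.card = d) : (mkS d T' h).card = d := by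
  rw [mkS, Finset.card_image_of_injective _ (mkS_strictMono T' h).injective]
  simp

lemma mkS_lt {m d : ℕ} (T' : Finset (Fin m)) (h : T'.card = d) :
    ∀ x ∈ mkS d T' h, x < m + d := by
  intro x hx
  rw [mkS, Finset.mem_image] at hx
  obtain ⟨j, -, rfl⟩ := hx
  have h1 : ((T'.orderEmbOfFin h j : Fin m) : ℕ) < m := (T'.orderEmbOfFin h j).isLt
  have h2 : (j : ℕ) < d := j.isLt
  omega

lemma mkS_gap {m d : ℕ} (T' : Finset (Fin m)) (h : T'.card = d) :
    ∀ x ∈ mkS d T' h, ∀ y ∈ mkS d T' h, x < y → x + 2 ≤ y := by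
  intro x hx y hy hxy
  rw [mkS, Finset.mem_image] at hx hy
  obtain ⟨j, -, rfl⟩ := hx
  obtain ⟨j', -, rfl⟩ := hy
  rcases lt_trichotomy j j' with hlt | rfl | hlt
  · have h1 : ((T'.orderEmbOfFin h j : Fin m) : ℕ) < ((T'.orderEmbOfFin h j' : Fin m) : ℕ) :=
      (T'.orderEmbOfFin h).strictMono hlt
    have h3 : (j : ℕ) < (j' : ℕ) := hlt
    omega
  · omega
  · have := mkS_strictMono T' h hlt
    simp only at this
    omega

lemma mkS_inj {m d : ℕ} (T' T'' : Finset (Fin m)) (h : T'.card = d) (h' : T''.card = d)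
    (heq : mkS d T' h = mkS d T'' h') : T' = T'' := by
  set e := T'.orderEmbOfFin h with he
  set e' := T''.orderEmbOfFin h' with he'
  set g : Fin d → ℕ := fun j => ((e j : Fin m) : ℕ) + (j : ℕ) with hg
  set g' : Fin d → ℕ := fun j => ((e' j : Fin m) : ℕ) + (j : ℕ) with hg'
  have hScard : (mkS d T' h).card = d := mkS_card T' h
  have hgmem : ∀ j, g j ∈ mkS d T' h := fun j =>
    Finset.mem_image_of_mem _ (Finset.mem_univ j)
  have hgmem' : ∀ j, g' j ∈ mkS d T' h := fun j => by
    rw [heq]; exact Finset.mem_image_of_mem _ (Finset.mem_univ j)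
  have h1 : g = ((mkS d T' h).orderEmbOfFin hScard : Fin d → ℕ) :=
    Finset.orderEmbOfFin_unique hScard hgmem (mkS_strictMono T' h)
  have h2 : g' = ((mkS d T' h).orderEmbOfFin hScard : Fin d → ℕ) :=
    Finset.orderEmbOfFin_unique hScard hgmem' (mkS_strictMono T'' h')
  have hgg : g = g' := h1.trans h2.symm
  have hee : ∀ j, e j = e' j := by
    intro j
    have := congrFun hgg j
    simp only [hg, hg'] at this
    exact Fin.ext (by omega)
  have hr := Finset.range_orderEmbOfFin T' h
  have hr' := Finset.range_orderEmbOfFin T'' h'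
  ext x
  constructor
  · intro hx
    have : x ∈ Set.range (e : Fin d → Fin m) := by rw [← he] at hr; rw [hr]; exact hx
    obtain ⟨j, rfl⟩ := this
    rw [hee j]
    exact Finset.orderEmbOfFin_mem T'' h' j
  · intro hx
    have : x ∈ Set.range (e' : Fin d → Fin m) := by rw [← he'] at hr'; rw [hr']; exact hx
    obtain ⟨j, rfl⟩ := this
    rw [← hee j]
    exact Finset.orderEmbOfFin_mem T' h j

lemma countP_ofFn {β : Type*} [DecidableEq β] {N : ℕ} (g : Fin N → β) (q : β → Bool) :
    (List.ofFn g).countP q = (Finset.univ.filter (fun k => q (g k) = true)).card := by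
  rw [List.ofFn_eq_map, List.countP_map, List.countP_eq_length_filter]
  have hnd : ((List.finRange N).filter (q ∘ g)).Nodup := (List.nodup_finRange N).filter _
  rw [← List.toFinset_card_of_nodup hnd]
  congr 1
  ext k
  simp [List.mem_filter, List.mem_finRange]

variable {𝒜 : Type*} [DecidableEq 𝒜]

def keptW (z o : 𝒜) (n : ℕ) (S : Finset ℕ) : List 𝒜 :=
  ((List.range n).filter (fun j => decide (j ∉ S))).map (fun j => if Even j then z else o)

lemma keptW_mem (z o : 𝒜) (n : ℕ) (S : Finset ℕ) :
    ∀ c ∈ keptW z o n S, c = z ∨ c = o := by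
  intro c hc
  rw [keptW, List.mem_map] at hc
  obtain ⟨j, -, rfl⟩ := hc
  by_cases hj : Even j <;> simp [hj]

lemma keptW_length (z o : 𝒜) (n : ℕ) (S : Finset ℕ) (hsub : S ⊆ Finset.range n) :
    (keptW z o n S).length = n - S.card := by
  rw [keptW, List.length_map, length_kept n S hsub]

lemma deleteIndices_keptW (z o : 𝒜) (n : ℕ) (S : Finset ℕ) :
    deleteIndices ((List.range n).map (fun j => if Even j then z else o)) S = keptW z o n S :=
  deleteIndices_map_range _ n S

lemma keptW_inj (z o : 𝒜) (hzo : z ≠ o) (n : ℕ) (S S' : Finset ℕ)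
    (hS : ∀ j, ¬(j ∈ S ∧ j + 1 ∈ S)) (hS' : ∀ j, ¬(j ∈ S' ∧ j + 1 ∈ S'))
    (hsub : S ⊆ Finset.range n) (hsub' : S' ⊆ Finset.range n)
    (heq : keptW z o n S = keptW z o n S') : S = S' := by
  set gd : 𝒜 → ℕ := fun c => if c = z then 0 else 1 with hgd
  have hgf : (gd ∘ (fun j => if Even j then z else o)) = (fun j : ℕ => j % 2) := by
    funext j
    by_cases hj : Even j
    · simp [hgd, hj, Nat.even_iff.mp hj]
    · have h1 : j % 2 = 1 := Nat.not_even_iff.mp hj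
      simp [hgd, hj, h1, Ne.symm hzo]
  set K : List ℕ := (List.range n).filter (fun j => decide (j ∉ S)) with hK
  set K' : List ℕ := (List.range n).filter (fun j => decide (j ∉ S')) with hK'
  have hpar : K.map (· % 2) = K'.map (· % 2) := by
    have h1 : K.map (· % 2) = (keptW z o n S).map gd := by
      rw [keptW, List.map_map, hgf]
    have h2 : K'.map (· % 2) = (keptW z o n S').map gd := by
      rw [keptW, List.map_map, hgf]
    rw [h1, h2, heq]
  have hcK := keptChain S hS n 0
  have hcK' := keptChain S' hS' n 0
  rw [← List.range_eq_range'] at hcK hcK'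
  rw [← hK] at hcK
  rw [← hK'] at hcK'
  have hKeq : K = K' := by
    apply parityAux K K' hcK.1 hcK'.1 hpar
    intro x y hx hy
    have hx1 : x ≤ 1 := by simpa using hcK.2 x hx
    have hy1 : y ≤ 1 := by simpa using hcK'.2 y hy
    have hxy : x % 2 = y % 2 := by
      have h3 := congrArg List.head? hpar
      rw [List.head?_map, List.head?_map, hx, hy] at h3
      simpa using h3
    omega
  ext j
  constructor
  · intro hj
    have hj1 : j ∈ Finset.range n := hsub hj
    have hj2 : j ∉ K := by
      rw [hK]
      simp only [List.mem_filter, decide_eq_true_eq, not_and]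
      intro _ h
      exact absurd hj h
    by_contra hj'
    apply hj2
    rw [hKeq, hK']
    simp only [List.mem_filter, decide_eq_true_eq]
    exact ⟨List.mem_range.mpr (Finset.mem_range.mp hj1), hj'⟩
  · intro hj
    have hj1 : j ∈ Finset.range n := hsub' hj
    have hj2 : j ∉ K' := by
      rw [hK']
      simp only [List.mem_filter, decide_eq_true_eq, not_and]
      intro _ h
      exact absurd hj h
    by_contra hj'
    apply hj2
    rw [← hKeq, hK]
    simp only [List.mem_filter, decide_eq_true_eq]
    exact ⟨List.mem_range.mpr (Finset.mem_range.mp hj1), hj'⟩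

def insV {z o : 𝒜} {M : ℕ} (T : Finset (Fin M))
    (vals : {x // x ∈ T} → {c : 𝒜 // ¬(c = z ∨ c = o)}) : List (Option 𝒜) :=
  List.ofFn (fun k : Fin M => if h : k ∈ T then some ((vals ⟨k, h⟩ : {c : 𝒜 // _}) : 𝒜) else none)

lemma insV_some_prop {z o : 𝒜} {M : ℕ} (T : Finset (Fin M))
    (vals : {x // x ∈ T} → {c : 𝒜 // ¬(c = z ∨ c = o)}) :
    ∀ b : 𝒜, some b ∈ insV T vals → ¬(b = z ∨ b = o) := by
  intro b hb
  rw [insV, List.mem_ofFn] at hb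
  obtain ⟨k, hk⟩ := hb
  by_cases h : k ∈ T
  · rw [dif_pos h] at hk
    have : ((vals ⟨k, h⟩ : {c : 𝒜 // _}) : 𝒜) = b := Option.some.inj hk
    rw [← this]
    exact (vals ⟨k, h⟩).2
  · rw [dif_neg h] at hk
    exact absurd hk (by simp)

lemma insV_countP_some {z o : 𝒜} {M : ℕ} (T : Finset (Fin M))
    (vals : {x // x ∈ T} → {c : 𝒜 // ¬(c = z ∨ c = o)}) :
    (insV T vals).countP (fun x => x.isSome) = T.card := by
  rw [insV, countP_ofFn]
  congr 1
  ext k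
  by_cases h : k ∈ T <;> simp [h]

lemma insV_countP_none {z o : 𝒜} {M : ℕ} (T : Finset (Fin M))
    (vals : {x // x ∈ T} → {c : 𝒜 // ¬(c = z ∨ c = o)}) :
    (insV T vals).countP (fun x => x.isNone) = M - T.card := by
  rw [insV, countP_ofFn]
  have h1 : (Finset.univ.filter
      (fun k : Fin M => ((if h : k ∈ T then
        some ((vals ⟨k, h⟩ : {c : 𝒜 // _}) : 𝒜) else none).isNone = true))) = Tᶜ := by
    ext k
    by_cases h : k ∈ T <;> simp [h]
  rw [show (Finset.univ.filter
      (fun k : Fin M => ((fun k : Fin M => if h : k ∈ T then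
        some ((vals ⟨k, h⟩ : {c : 𝒜 // _}) : 𝒜) else none) k).isNone = true)) = Tᶜ from h1,
    Finset.card_compl, Fintype.card_fin]

lemma insV_length {z o : 𝒜} {M : ℕ} (T : Finset (Fin M))
    (vals : {x // x ∈ T} → {c : 𝒜 // ¬(c = z ∨ c = o)}) :
    (insV T vals).length = M := by
  rw [insV, List.length_ofFn]

lemma insV_inj_T {z o : 𝒜} {M : ℕ} (T T' : Finset (Fin M))
    (vals : {x // x ∈ T} → {c : 𝒜 // ¬(c = z ∨ c = o)})
    (vals' : {x // x ∈ T'} → {c : 𝒜 // ¬(c = z ∨ c = o)})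
    (heq : insV T vals = insV T' vals') : T = T' := by
  have h0 := List.ofFn_inj.mp heq
  ext k
  have h1 := congrFun h0 k
  by_cases h : k ∈ T <;> by_cases h' : k ∈ T' <;> simp_all [dif_pos, dif_neg]

lemma insV_inj_vals {z o : 𝒜} {M : ℕ} (T : Finset (Fin M))
    (vals vals' : {x // x ∈ T} → {c : 𝒜 // ¬(c = z ∨ c = o)})
    (heq : insV T vals = insV T vals') : vals = vals' := by
  have h0 := List.ofFn_inj.mp heq
  funext x
  obtain ⟨k, hk⟩ := x
  have h1 := congrFun h0 k
  rw [dif_pos hk, dif_pos hk] at h1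
  exact Subtype.ext (Option.some.inj h1)

end EditAux

open EditAux

/-- Theorem 2 (combinatorial core): from the alternating string `0101…01` of even
length `n`, deleting `d` pairwise non-adjacent positions and then inserting `i`
symbols other than `0` and `1` yields at least `C(n−d,d)·C(n−d+i,i)·(a−2)^i`
distinct strings; in particular the post-edit set with budgets `(d, i)` is at
least that large. -/
theorem card_postEdit_alternating_ge {𝒜 : Type*} [Fintype 𝒜] [DecidableEq 𝒜] {a : ℕ}
    (hcard : Fintype.card 𝒜 = a) (ha : 3 ≤ a) (z o : 𝒜) (hzo : z ≠ o)
    (n d i : ℕ) (hn : Even n) (hd : 2 * d ≤ n)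
    (X : List 𝒜) (hXdef : X = (List.range n).map (fun j => if Even j then z else o)) :
    Nat.card {Y : List 𝒜 | ∃ S : Finset ℕ, S ⊆ Finset.range n ∧ S.card = d ∧
        (∀ j, ¬(j ∈ S ∧ j + 1 ∈ S)) ∧
        InsertSeq ({z, o} : Set 𝒜)ᶜ i (deleteIndices X S) Y} ≥
      (n - d).choose d * (n - d + i).choose i * (a - 2) ^ i ∧
    Nat.card (PostEditSet X d i) ≥
      (n - d).choose d * (n - d + i).choose i * (a - 2) ^ i := by
  classical
  have hdn : d ≤ n := by omega
  set 𝒮 : Set (List 𝒜) := {Y : List 𝒜 | ∃ S : Finset ℕ, S ⊆ Finset.range n ∧ S.card = d ∧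
      (∀ j, ¬(j ∈ S ∧ j + 1 ∈ S)) ∧
      InsertSeq ({z, o} : Set 𝒜)ᶜ i (deleteIndices X S) Y} with h𝒮
  set p : 𝒜 → Bool := fun c => decide (c = z ∨ c = o) with hp
  have hXlen : X.length = n := by rw [hXdef]; simp
  have hincl : 𝒮 ⊆ PostEditSet X d i := by
    rintro Y ⟨S, hsub, hScard, hSnadj, hins⟩
    have hzsub : (deleteIndices X S).Sublist X := by
      have h := (List.filter_sublist (p := fun q : 𝒜 × ℕ => decide (q.2 ∉ S)) (l := X.zipIdx)).map Prod.fst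
      rwa [List.zipIdx_map_fst] at h
    have hzlen : (deleteIndices X S).length = n - d := by
      rw [hXdef, deleteIndices_keptW, keptW_length z o n S hsub, hScard]
    have hspec := insertSeq_spec hins
    exact ⟨deleteIndices X S, hzsub, hspec.1, by omega, by omega⟩
  have hfinP : (PostEditSet X d i).Finite := by
    apply (List.finite_length_le 𝒜 (n + i)).subset
    rintro Y ⟨Z, hZX, hZY, h1, h2⟩
    have h3 := hZX.length_le
    have h4 := hZY.length_le
    simp only [Set.mem_setOf_eq]
    omega
  have hfin𝒮 : 𝒮.Finite := hfinP.subset hincl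
  haveI : Finite ↥𝒮 := hfin𝒮.to_subtype
  -- helper facts
  have hsubS : ∀ (T' : Finset (Fin (n - d))) (hT' : T'.card = d),
      mkS d T' hT' ⊆ Finset.range n := by
    intro T' hT' x hx
    exact Finset.mem_range.mpr (lt_of_lt_of_le (mkS_lt T' hT' x hx) (by omega))
  have hnadjS : ∀ (T' : Finset (Fin (n - d))) (hT' : T'.card = d) (j : ℕ),
      ¬(j ∈ mkS d T' hT' ∧ j + 1 ∈ mkS d T' hT') := by
    rintro T' hT' j ⟨h1, h2⟩
    have := mkS_gap T' hT' j h1 (j + 1) h2 (by omega)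
    omega
  have hwlen : ∀ (T' : Finset (Fin (n - d))) (hT' : T'.card = d),
      (keptW z o n (mkS d T' hT')).length = n - d := by
    intro T' hT'
    rw [keptW_length z o n _ (hsubS T' hT'), mkS_card]
  have hwP : ∀ (S0 : Finset ℕ) (c : 𝒜), c ∈ keptW z o n S0 → p c = true := by
    intro S0 c hc
    simpa [hp] using keptW_mem z o n S0 c hc
  have hvP : ∀ (T : Finset (Fin (n - d + i)))
      (vals : {x // x ∈ T} → {c : 𝒜 // ¬(c = z ∨ c = o)}) (b : 𝒜),
      some b ∈ insV T vals → p b = false := by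
    intro T vals b hb
    simpa [hp] using insV_some_prop T vals b hb
  have hvNone : ∀ (T : Finset (Fin (n - d + i))) (hT : T.card = i)
      (vals : {x // x ∈ T} → {c : 𝒜 // ¬(c = z ∨ c = o)}),
      (insV T vals).countP (fun x => x.isNone) = n - d := by
    intro T hT vals
    rw [insV_countP_none, hT]
    omega
  -- the key membership fact
  have key : ∀ (q : ({T' : Finset (Fin (n - d)) // T'.card = d} ×
      Σ T : {T : Finset (Fin (n - d + i)) // T.card = i},
        ({x // x ∈ T.1} → {c : 𝒜 // ¬(c = z ∨ c = o)}))),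
      mrg (keptW z o n (mkS d q.1.1 q.1.2)) (insV q.2.1.1 q.2.2) ∈ 𝒮 := by
    rintro ⟨⟨T', hT'⟩, ⟨⟨T, hT⟩, vals⟩⟩
    dsimp only
    refine ⟨mkS d T' hT', hsubS T' hT', mkS_card T' hT', hnadjS T' hT', ?_⟩
    rw [hXdef, deleteIndices_keptW]
    have hfil : (mrg (keptW z o n (mkS d T' hT')) (insV T vals)).filter p =
        keptW z o n (mkS d T' hT') :=
      mrg_filter p (insV T vals) _ (hwP _) (hvP T vals)
    have hlen : (mrg (keptW z o n (mkS d T' hT')) (insV T vals)).length =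
        (keptW z o n (mkS d T' hT')).length + i := by
      rw [mrg_length (insV T vals) _ (by rw [hvNone T hT vals, hwlen T' hT']),
        insV_countP_some, hT]
    refine insertSeq_of_filter p _ i _ hfil hlen ?_
    intro c _ hcp
    simp only [hp, decide_eq_false_iff_not] at hcp
    simp only [Set.mem_compl_iff, Set.mem_insert_iff, Set.mem_singleton_iff]
    exact hcp
  -- injectivity
  have hinj : Function.Injective (fun q : ({T' : Finset (Fin (n - d)) // T'.card = d} ×
      Σ T : {T : Finset (Fin (n - d + i)) // T.card = i},
        ({x // x ∈ T.1} → {c : 𝒜 // ¬(c = z ∨ c = o)})) =>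
      (⟨mrg (keptW z o n (mkS d q.1.1 q.1.2)) (insV q.2.1.1 q.2.2), key q⟩ : ↥𝒮)) := by
    rintro ⟨⟨T1, hT1⟩, ⟨⟨U1, hU1⟩, v1⟩⟩ ⟨⟨T2, hT2⟩, ⟨⟨U2, hU2⟩, v2⟩⟩ heq
    have heq' : mrg (keptW z o n (mkS d T1 hT1)) (insV U1 v1) =
        mrg (keptW z o n (mkS d T2 hT2)) (insV U2 v2) := congrArg Subtype.val heq
    have hweq : keptW z o n (mkS d T1 hT1) = keptW z o n (mkS d T2 hT2) := by
      have h1 := mrg_filter p (insV U1 v1) (keptW z o n (mkS d T1 hT1)) (hwP _) (hvP U1 v1)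
      have h2 := mrg_filter p (insV U2 v2) (keptW z o n (mkS d T2 hT2)) (hwP _) (hvP U2 v2)
      rw [← h1, ← h2, heq']
    have hVeq : insV U1 v1 = insV U2 v2 := by
      have h1 := mrg_map p (insV U1 v1) (keptW z o n (mkS d T1 hT1)) (hwP _) (hvP U1 v1)
        (by rw [hvNone U1 hU1 v1, hwlen T1 hT1])
      have h2 := mrg_map p (insV U2 v2) (keptW z o n (mkS d T2 hT2)) (hwP _) (hvP U2 v2)
        (by rw [hvNone U2 hU2 v2, hwlen T2 hT2])
      rw [← h1, ← h2, heq']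
    have hU : U1 = U2 := insV_inj_T U1 U2 v1 v2 hVeq
    subst hU
    have hv : v1 = v2 := insV_inj_vals U1 v1 v2 hVeq
    subst hv
    have hSeq : mkS d T1 hT1 = mkS d T2 hT2 :=
      keptW_inj z o hzo n _ _ (hnadjS T1 hT1) (hnadjS T2 hT2)
        (hsubS T1 hT1) (hsubS T2 hT2) hweq
    have hTeq : T1 = T2 := mkS_inj T1 T2 hT1 hT2 hSeq
    subst hTeq
    rfl
  -- cardinality of the parameter type
  have hcardB : Fintype.card {c : 𝒜 // ¬(c = z ∨ c = o)} = a - 2 := by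
    rw [Fintype.card_subtype_compl]
    have h2 : Fintype.card {c : 𝒜 // c = z ∨ c = o} = 2 := by
      rw [Fintype.card_subtype]
      have h3 : Finset.filter (fun c => c = z ∨ c = o) Finset.univ = ({z, o} : Finset 𝒜) := by
        ext c; simp
      rw [h3, Finset.card_insert_of_notMem (by simp [hzo]), Finset.card_singleton]
    rw [hcard, h2]
  have hcardP : Nat.card ({T' : Finset (Fin (n - d)) // T'.card = d} ×
      Σ T : {T : Finset (Fin (n - d + i)) // T.card = i},
        ({x // x ∈ T.1} → {c : 𝒜 // ¬(c = z ∨ c = o)})) =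
      (n - d).choose d * ((n - d + i).choose i * (a - 2) ^ i) := by
    rw [Nat.card_eq_fintype_card, Fintype.card_prod, Fintype.card_sigma]
    congr 1
    · rw [Fintype.card_finset_len, Fintype.card_fin]
    · have h4 : ∀ T : {T : Finset (Fin (n - d + i)) // T.card = i},
          Fintype.card ({x // x ∈ T.1} → {c : 𝒜 // ¬(c = z ∨ c = o)}) = (a - 2) ^ i := by
        intro T
        rw [Fintype.card_fun, hcardB, Fintype.card_coe, T.2]
      rw [Finset.sum_congr rfl (fun T _ => h4 T), Finset.sum_const, Finset.card_univ,
        Fintype.card_finset_len, Fintype.card_fin, smul_eq_mul]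
  have hle := Nat.card_le_card_of_injective _ hinj
  rw [hcardP] at hle
  have hmono := Nat.card_mono hfinP hincl
  constructor
  · rw [ge_iff_le, mul_assoc]
    exact hle
  · rw [ge_iff_le, mul_assoc]
    exact le_trans hle hmono
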